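/- There exists a matrix-valued function Ψ : ℂ → M_N(ℂ) whose entries are analytic at k₁, such that Ψ(k) = Φ(k)·(I + ((k₁−k̄₁)/(k−k₁))P) for all k ≠ k₁ in some punctured neighborhood of k₁, and Ψ(k₁) = Φ(k₁) + (k₁−k̄₁)·Φ'(k₁)·P, where Φ' denotes the entrywise complex derivative. In particular, the singularity of Φ(k)χ(k)^{-1} at k = k₁ is removable. -/
import Mathlib


open scoped BigOperators Matrix

theorem analyticAt_dslope_aux {f : ℂ → ℂ} {z : ℂ} (hf : AnalyticAt ℂ f z) :
    AnalyticAt ℂ (dslope f z) z := by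
  obtain ⟨p, hp⟩ := hf
  exact ⟨p.fslope, hp.has_fpower_series_dslope_fslope⟩

/-- If `Φ` has entries analytic at `k₁` and `Φ(k₁) v_j = 0` for all `j`,
then `Φ(k)χ(k)⁻¹` extends analytically across `k₁`, with value
`Φ(k₁) + (k₁−k̄₁)Φ'(k₁)P` at `k₁`. -/
theorem removable_singularity (N m : ℕ) (hN : 1 ≤ N) (hm : 1 ≤ m)
    (k₁ kb : ℂ) (hk : k₁ ≠ kb)
    (v w : Fin m → Fin N → ℂ)
    (K : Matrix (Fin m) (Fin m) ℂ)
    (hK : ∀ i j, K i j = ∑ a, w i a * v j a)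
    (hKunit : IsUnit K)
    (P : Matrix (Fin N) (Fin N) ℂ)
    (hP : P = ∑ i, ∑ j, K⁻¹ i j • Matrix.vecMulVec (v i) (w j))
    (Φ : ℂ → Matrix (Fin N) (Fin N) ℂ)
    (hΦ : ∀ a b, AnalyticAt ℂ (fun k => Φ k a b) k₁)
    (hker : ∀ j, Φ k₁ *ᵥ v j = 0) :
    ∃ Ψ : ℂ → Matrix (Fin N) (Fin N) ℂ,
      (∀ a b, AnalyticAt ℂ (fun k => Ψ k a b) k₁) ∧
      (∀ᶠ k in nhdsWithin k₁ {k₁}ᶜ,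
        Ψ k = Φ k * (1 + ((k₁ - kb) / (k - k₁)) • P)) ∧
      Ψ k₁ = Φ k₁ +
        (k₁ - kb) • ((Matrix.of fun a b => deriv (fun k => Φ k a b) k₁) * P) := by
  -- Φ(k₁) * P = 0
  have hΦP : Φ k₁ * P = 0 := by
    ext a b
    rw [hP, Matrix.mul_apply]
    simp only [Matrix.sum_apply, Matrix.smul_apply, Matrix.vecMulVec_apply, smul_eq_mul,
      Matrix.zero_apply]
    have : ∀ c, Φ k₁ a c * ∑ i, ∑ j, K⁻¹ i j * (v i c * w j b)
        = ∑ i, ∑ j, K⁻¹ i j * w j b * (Φ k₁ a c * v i c) := by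
      intro c
      rw [Finset.mul_sum]
      refine Finset.sum_congr rfl fun i _ => ?_
      rw [Finset.mul_sum]
      refine Finset.sum_congr rfl fun j _ => ?_
      ring
    simp only [this]
    rw [Finset.sum_comm]
    refine Finset.sum_eq_zero fun i _ => ?_
    rw [Finset.sum_comm]
    refine Finset.sum_eq_zero fun j _ => ?_
    rw [← Finset.mul_sum]
    have hz : ∑ c, Φ k₁ a c * v i c = 0 := by
      have := congrFun (hker i) a
      simpa [Matrix.mulVec, dotProduct] using this
    rw [hz, mul_zero]
  set D : ℂ → Matrix (Fin N) (Fin N) ℂ :=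
    fun k => Matrix.of fun a b => dslope (fun k => Φ k a b) k₁ k with hD
  refine ⟨fun k => Φ k + (k₁ - kb) • (D k * P), ?_, ?_, ?_⟩
  · intro a b
    have h1 : ∀ c, AnalyticAt ℂ (fun k => dslope (fun k => Φ k a c) k₁ k) k₁ := fun c =>
      analyticAt_dslope_aux (hΦ a c)
    have h2 : AnalyticAt ℂ (fun k => ∑ c, dslope (fun k => Φ k a c) k₁ k * P c b) k₁ :=
      Finset.analyticAt_fun_sum _ (fun c _ => (h1 c).mul analyticAt_const)
    have h3 : AnalyticAt ℂ (fun k => (k₁ - kb) * ∑ c, dslope (fun k => Φ k a c) k₁ k * P c b) k₁ :=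
      (analyticAt_const (v := k₁ - kb)).mul h2
    refine ((hΦ a b).add h3).congr (Filter.Eventually.of_forall fun k => ?_)
    simp [hD, Matrix.add_apply, Matrix.smul_apply, Matrix.mul_apply, smul_eq_mul]
  · filter_upwards [self_mem_nhdsWithin] with k hkne
    have hne : k ≠ k₁ := hkne
    have hDk : D k = (k - k₁)⁻¹ • (Φ k - Φ k₁) := by
      ext a b
      simp only [hD, Matrix.of_apply, dslope_of_ne _ hne, slope_def_field,
        Matrix.smul_apply, Matrix.sub_apply, smul_eq_mul]
      field_simp [sub_ne_zero.mpr hne]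
    rw [hDk, Matrix.smul_mul, Matrix.sub_mul, hΦP, sub_zero, mul_add, mul_one,
      Matrix.mul_smul, smul_smul, div_eq_mul_inv]
  · have hDk₁ : D k₁ = Matrix.of fun a b => deriv (fun k => Φ k a b) k₁ := by
      ext a b
      simp [hD, dslope_same]
    show Φ k₁ + (k₁ - kb) • (D k₁ * P) = _
    rw [hDk₁]
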